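/- For all N×N density matrices ρ and τ, the Wigner functions W_ρ and W_τ are real-valued and sup_{(q,p) ∈ ℝ²} |W_ρ(q,p) − W_τ(q,p)| ≤ (1/π) ‖ρ − τ‖₁. -/

import Mathlib

open MeasureTheory ComplexOrder

/-- The physicists' Hermite polynomials, defined by `H₀ = 1`,
`H_{k+1}(x) = 2x H_k(x) − H_k'(x)`. -/
noncomputable def physHermite : ℕ → Polynomial ℝ
  | 0 => 1
  | n + 1 => 2 * Polynomial.X * physHermite n - Polynomial.derivative (physHermite n)

/-- Normalizing constant `c_k = (√π 2^k k!)^{-1/2}` making `∫ ψ_k² = 1`. -/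
noncomputable def hermiteConst (k : ℕ) : ℝ :=
  1 / Real.sqrt (Real.sqrt Real.pi * 2 ^ k * (k.factorial : ℝ))

/-- The `k`-th Hermite function `ψ_k(x) = c_k H_k(x) e^{-x²/2}`. -/
noncomputable def hermiteFun (k : ℕ) (x : ℝ) : ℝ :=
  hermiteConst k * (physHermite k).eval x * Real.exp (-(x ^ 2) / 2)

/-- `p_A(x,φ) = (1/π) Σ_{j,k} A_{j,k} ψ_k(x) ψ_j(x) e^{−i(j−k)φ}`. -/
noncomputable def pFun {N : ℕ} (A : Matrix (Fin N) (Fin N) ℂ) (x φ : ℝ) : ℂ :=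
  ((1 / Real.pi : ℝ) : ℂ) * ∑ j : Fin N, ∑ k : Fin N,
    A j k * ((hermiteFun k x : ℝ) : ℂ) * ((hermiteFun j x : ℝ) : ℂ) *
      Complex.exp (-Complex.I * ((((j : ℕ) : ℂ)) - (((k : ℕ) : ℂ))) * (φ : ℂ))

/-- A density matrix: positive semidefinite with trace one. -/
def IsDensityMatrix {N : ℕ} (ρ : Matrix (Fin N) (Fin N) ℂ) : Prop :=
  ρ.PosSemidef ∧ ρ.trace = 1

/-- The trace norm of a Hermitian matrix: the sum of the absolute values of
its eigenvalues. -/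
noncomputable def traceNorm {N : ℕ} (A : Matrix (Fin N) (Fin N) ℂ)
    (hA : A.IsHermitian) : ℝ :=
  ∑ i, |hA.eigenvalues i|

/-- The cross-Wigner function
`W_{ψ,χ}(q,p) = (1/π) ∫ conj(ψ(q+t)) χ(q−t) e^{2ipt} dt`. -/
noncomputable def crossWigner (ψ χ : ℝ → ℂ) (q p : ℝ) : ℂ :=
  ((1 / Real.pi : ℝ) : ℂ) * ∫ t : ℝ,
    (starRingEnd ℂ) (ψ (q + t)) * χ (q - t) *
      Complex.exp (2 * (p : ℂ) * (t : ℂ) * Complex.I)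

/-- `W_A = Σ_{j,k} A_{j,k} W_{ψ_j,ψ_k}` for an `N×N` matrix `A`, with `ψ_k`
the Hermite functions. -/
noncomputable def WMat {N : ℕ} (A : Matrix (Fin N) (Fin N) ℂ) (q p : ℝ) : ℂ :=
  ∑ j : Fin N, ∑ k : Fin N, A j k *
    crossWigner (fun x => ((hermiteFun j x : ℝ) : ℂ))
      (fun x => ((hermiteFun k x : ℝ) : ℂ)) q p

open Polynomial in

lemma physHermite_succ (n : ℕ) :
    physHermite (n + 1) = 2 * X * physHermite n - derivative (physHermite n) := rfl

open Polynomial in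

lemma derivative_physHermite_succ (n : ℕ) :
    derivative (physHermite (n + 1)) = (2 * (n + 1) : ℝ) • physHermite n := by
  induction n with
  | zero =>
      show derivative (2 * X * physHermite 0 - derivative (physHermite 0)) = _
      show derivative (2 * X * 1 - derivative 1) = _
      simp only [Polynomial.smul_eq_C_mul]
      simp [physHermite, map_ofNat]
  | succ n ih =>
      rw [physHermite_succ (n + 1), derivative_sub, derivative_mul, ih, derivative_smul,
        physHermite_succ n]
      simp only [Polynomial.smul_eq_C_mul, map_mul, map_add, map_one, map_ofNat,
        Polynomial.derivative_mul, Polynomial.derivative_ofNat, Polynomial.derivative_X]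
      push_cast
      simp only [map_add, map_one]
      ring

lemma integrable_eval_mul_gauss (P : Polynomial ℝ) :
    Integrable (fun x : ℝ => P.eval x * Real.exp (-(x ^ 2))) := by
  induction P using Polynomial.induction_on' with
  | add p q hp hq => simpa [add_mul, Pi.add_def] using hp.add hq
  | monomial n a =>
      have hs : (-1 : ℝ) < (n : ℝ) := lt_of_lt_of_le neg_one_lt_zero (Nat.cast_nonneg n)
      have h := (integrable_rpow_mul_exp_neg_mul_sq one_pos hs).const_mul a
      simp only [Real.rpow_natCast, one_mul, neg_mul] at h
      simpa [Polynomial.eval_monomial, mul_assoc] using h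

lemma integrable_eval_mul_eval_gauss (P Q : Polynomial ℝ) :
    Integrable (fun x : ℝ => P.eval x * Q.eval x * Real.exp (-(x ^ 2))) := by
  simpa [Polynomial.eval_mul] using integrable_eval_mul_gauss (P * Q)

lemma hasDerivAt_hermiteGauss (n : ℕ) (x : ℝ) :
    HasDerivAt (fun y : ℝ => (physHermite n).eval y * Real.exp (-(y ^ 2)))
      (-((physHermite (n + 1)).eval x * Real.exp (-(x ^ 2)))) x := by
  have h1 := (physHermite n).hasDerivAt x
  have h2 : HasDerivAt (fun y : ℝ => -(y ^ 2)) (-(2 * x)) x := by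
    have := (hasDerivAt_pow 2 x).neg
    simp only [Pi.neg_def] at this
    simpa using this
  have h3 := h2.exp
  have := h1.mul h3
  refine this.congr_deriv ?_
  rw [physHermite_succ]
  simp only [Polynomial.eval_sub, Polynomial.eval_mul, Polynomial.eval_ofNat, Polynomial.eval_X]
  ring

open Polynomial in
lemma derivative_physHermite (n : ℕ) :
    derivative (physHermite n) = (2 * n : ℝ) • physHermite (n - 1) := by
  cases n with
  | zero => simp [physHermite]
  | succ n => simpa using derivative_physHermite_succ n

lemma physHermite_zero : physHermite 0 = 1 := rfl

noncomputable def HI (n m : ℕ) : ℝ :=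
  ∫ x : ℝ, (physHermite n).eval x * (physHermite m).eval x * Real.exp (-(x ^ 2))

lemma HI_symm (n m : ℕ) : HI n m = HI m n := by
  unfold HI
  congr 1; ext x; ring

lemma HI_succ (n m : ℕ) : HI (n + 1) m = (2 * m : ℝ) * HI n (m - 1) := by
  have hu : ∀ x : ℝ, HasDerivAt (fun y => (physHermite m).eval y)
      ((Polynomial.derivative (physHermite m)).eval x) x := fun x => (physHermite m).hasDerivAt x
  have hv := hasDerivAt_hermiteGauss n
  have huv' : Integrable ((fun y => (physHermite m).eval y) *
      (fun x => -((physHermite (n + 1)).eval x * Real.exp (-(x ^ 2))))) := by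
    have := (integrable_eval_mul_eval_gauss (physHermite m) (physHermite (n + 1))).neg
    apply this.congr
    filter_upwards with x
    simp [Pi.mul_apply]; ring
  have hu'v : Integrable ((fun x => (Polynomial.derivative (physHermite m)).eval x) *
      (fun y => (physHermite n).eval y * Real.exp (-(y ^ 2)))) := by
    have := integrable_eval_mul_eval_gauss (Polynomial.derivative (physHermite m)) (physHermite n)
    apply this.congr
    filter_upwards with x
    simp [Pi.mul_apply]; ring
  have huv : Integrable ((fun y => (physHermite m).eval y) *
      (fun y => (physHermite n).eval y * Real.exp (-(y ^ 2)))) := by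
    have := integrable_eval_mul_eval_gauss (physHermite m) (physHermite n)
    apply this.congr
    filter_upwards with x
    simp [Pi.mul_apply]; ring
  have key := integral_mul_deriv_eq_deriv_mul_of_integrable (fun x _ => hu x) (fun x _ => hv x) huv' hu'v huv
  -- key : ∫ H_m * (-(H_{n+1} e)) = - ∫ (dH_m) * (H_n e)
  have lhs : ∫ x : ℝ, (physHermite m).eval x * -((physHermite (n + 1)).eval x * Real.exp (-(x ^ 2)))
      = - HI (n + 1) m := by
    unfold HI
    rw [← integral_neg]
    congr 1; ext x; ring
  have rhs : ∫ x : ℝ, (Polynomial.derivative (physHermite m)).eval x *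
      ((physHermite n).eval x * Real.exp (-(x ^ 2))) = (2 * m : ℝ) * HI n (m - 1) := by
    have heq : (fun x : ℝ => (Polynomial.derivative (physHermite m)).eval x *
        ((physHermite n).eval x * Real.exp (-(x ^ 2)))) = fun x : ℝ =>
        (2 * m : ℝ) * ((physHermite n).eval x * (physHermite (m - 1)).eval x *
          Real.exp (-(x ^ 2))) := by
      ext x
      simp only [derivative_physHermite m, Polynomial.eval_smul, smul_eq_mul]
      ring
    show (∫ x : ℝ, (Polynomial.derivative (physHermite m)).eval x *
        ((physHermite n).eval x * Real.exp (-(x ^ 2)))) = _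
    rw [heq, integral_const_mul]
    rfl
  rw [lhs, rhs] at key
  linarith

lemma HI_self_succ (n : ℕ) : HI (n + 1) (n + 1) = (2 * (n + 1) : ℝ) * HI n n := by
  simpa using HI_succ n (n + 1)

lemma HI_zero_zero : HI 0 0 = Real.sqrt Real.pi := by
  unfold HI
  simp only [physHermite_zero, Polynomial.eval_one, one_mul]
  have := integral_gaussian 1
  simpa using this

lemma HI_eq (n : ℕ) : ∀ m : ℕ,
    HI n m = if n = m then (2 ^ n * n.factorial : ℝ) * Real.sqrt Real.pi else 0 := by
  induction n with
  | zero =>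
      intro m
      cases m with
      | zero => simpa using HI_zero_zero
      | succ m =>
          rw [HI_symm, HI_succ]
          simp
  | succ n ih =>
      intro m
      cases m with
      | zero =>
          rw [HI_succ]
          simp
      | succ m =>
          rw [HI_succ, Nat.add_sub_cancel, ih m]
          by_cases h : n = m
          · subst h
            simp [Nat.factorial_succ]
            ring
          · simp [h, fun hh => h (Nat.succ_injective hh)]

lemma HI_eq' (n m : ℕ) :
    (∫ x : ℝ, (physHermite n).eval x * (physHermite m).eval x * Real.exp (-(x ^ 2)))
      = if n = m then (2 ^ n * n.factorial : ℝ) * Real.sqrt Real.pi else 0 := HI_eq n m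

lemma continuous_hermiteFun (k : ℕ) : Continuous (hermiteFun k) := by
  unfold hermiteFun
  fun_prop

lemma hermiteFun_mul_self (n m : ℕ) (x : ℝ) :
    hermiteFun n x * hermiteFun m x = (hermiteConst n * hermiteConst m) *
      ((physHermite n).eval x * (physHermite m).eval x * Real.exp (-(x ^ 2))) := by
  unfold hermiteFun
  rw [show Real.exp (-(x ^ 2)) = Real.exp (-(x ^ 2) / 2) * Real.exp (-(x ^ 2) / 2) by
    rw [← Real.exp_add]; ring_nf]
  ring

lemma integrable_hermiteFun_mul (n m : ℕ) :
    Integrable (fun x : ℝ => hermiteFun n x * hermiteFun m x) := by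
  simp only [hermiteFun_mul_self]
  exact ((by simpa [Polynomial.eval_mul] using
    integrable_eval_mul_gauss (physHermite n * physHermite m) :
      Integrable (fun x : ℝ => (physHermite n).eval x * (physHermite m).eval x *
        Real.exp (-(x ^ 2))))).const_mul _

lemma sqrtpi_fact_pos (k : ℕ) : (0 : ℝ) < Real.sqrt Real.pi * 2 ^ k * (k.factorial : ℝ) := by
  have h1 : (0:ℝ) < Real.sqrt Real.pi := Real.sqrt_pos.mpr Real.pi_pos
  positivity

lemma integral_hermiteFun_mul (n m : ℕ) :
    (∫ x : ℝ, hermiteFun n x * hermiteFun m x) = if n = m then 1 else 0 := by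
  simp only [hermiteFun_mul_self]
  rw [integral_const_mul, HI_eq']
  by_cases h : n = m
  · subst h
    rw [if_pos rfl, if_pos rfl]
    unfold hermiteConst
    have hpos := sqrtpi_fact_pos n
    rw [div_mul_div_comm, one_mul, Real.mul_self_sqrt hpos.le]
    rw [one_div, inv_mul_eq_div, div_eq_one_iff_eq hpos.ne']
    ring
  · simp [h]

lemma hermiteFun_shift_mul (n m : ℕ) (q t : ℝ) :
    hermiteFun n (q + t) * hermiteFun m (q - t) =
      (hermiteConst n * hermiteConst m * Real.exp (-(q ^ 2))) *
      (((physHermite n).comp (Polynomial.C q + Polynomial.X)) *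
        ((physHermite m).comp (Polynomial.C q - Polynomial.X))).eval t * Real.exp (-(t ^ 2)) := by
  unfold hermiteFun
  simp only [Polynomial.eval_mul, Polynomial.eval_comp, Polynomial.eval_add, Polynomial.eval_sub,
    Polynomial.eval_C, Polynomial.eval_X]
  have hexp : Real.exp (-((q + t) ^ 2) / 2) * Real.exp (-((q - t) ^ 2) / 2)
      = Real.exp (-(q ^ 2)) * Real.exp (-(t ^ 2)) := by
    rw [← Real.exp_add, ← Real.exp_add]; ring_nf
  linear_combination (hermiteConst n * Polynomial.eval (q + t) (physHermite n) *
    (hermiteConst m * Polynomial.eval (q - t) (physHermite m))) * hexp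

lemma integrable_shift_mul (n m : ℕ) (q : ℝ) :
    Integrable (fun t : ℝ => hermiteFun n (q + t) * hermiteFun m (q - t)) := by
  simp only [hermiteFun_shift_mul]
  have := (integrable_eval_mul_gauss
    (((physHermite n).comp (Polynomial.C q + Polynomial.X)) *
      ((physHermite m).comp (Polynomial.C q - Polynomial.X)))).const_mul
      (hermiteConst n * hermiteConst m * Real.exp (-(q ^ 2)))
  apply this.congr
  filter_upwards with t
  ring

lemma integrable_cross (n m : ℕ) (q p : ℝ) :
    Integrable (fun t : ℝ => ((hermiteFun n (q + t) : ℝ) : ℂ) *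
      ((hermiteFun m (q - t) : ℝ) : ℂ) * Complex.exp (2 * (p : ℂ) * (t : ℂ) * Complex.I)) := by
  have hmeas : AEStronglyMeasurable (fun t : ℝ => ((hermiteFun n (q + t) : ℝ) : ℂ) *
      ((hermiteFun m (q - t) : ℝ) : ℂ) * Complex.exp (2 * (p : ℂ) * (t : ℂ) * Complex.I)) volume := by
    apply Continuous.aestronglyMeasurable
    have h1 : Continuous fun t : ℝ => hermiteFun n (q + t) :=
      (continuous_hermiteFun n).comp (continuous_const.add continuous_id)
    have h2 : Continuous fun t : ℝ => hermiteFun m (q - t) :=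
      (continuous_hermiteFun m).comp (continuous_const.sub continuous_id)
    have h3 : Continuous fun t : ℝ => Complex.exp (2 * (p : ℂ) * (t : ℂ) * Complex.I) := by
      fun_prop
    exact ((Complex.continuous_ofReal.comp h1).mul (Complex.continuous_ofReal.comp h2)).mul h3
  refine Integrable.mono' ((integrable_shift_mul n m q).abs) hmeas ?_
  filter_upwards with t
  rw [norm_mul, norm_mul]
  have habs : ‖Complex.exp (2 * (p : ℂ) * (t : ℂ) * Complex.I)‖ = 1 := by
    rw [Complex.norm_exp]
    simp [Complex.mul_re, Complex.mul_im]
  simp only [habs, mul_one, Complex.norm_real, Real.norm_eq_abs]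
  rw [← abs_mul]

noncomputable def Ffun {N : ℕ} (a : Fin N → ℂ) (x : ℝ) : ℂ :=
  ∑ j : Fin N, a j * ((hermiteFun j x : ℝ) : ℂ)

-- expansion of |F x|^2 as a real double sum

lemma normSq_Ffun {N : ℕ} (a : Fin N → ℂ) (x : ℝ) :
    ‖Ffun a x‖ ^ 2 = ∑ j : Fin N, ∑ k : Fin N,
      (a j * (starRingEnd ℂ) (a k)).re * (hermiteFun j x * hermiteFun k x) := by
  have h : (‖Ffun a x‖ : ℝ) ^ 2 = (Ffun a x * (starRingEnd ℂ) (Ffun a x)).re := by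
    rw [Complex.mul_conj]
    simp [Complex.sq_norm]
  rw [h]
  unfold Ffun
  rw [map_sum, Finset.sum_mul_sum]
  rw [Complex.re_sum]
  refine Finset.sum_congr rfl fun j _ => ?_
  rw [Complex.re_sum]
  refine Finset.sum_congr rfl fun k _ => ?_
  simp only [map_mul, Complex.conj_ofReal]
  have : a j * ((hermiteFun j x : ℝ) : ℂ) * ((starRingEnd ℂ) (a k) * ((hermiteFun k x : ℝ) : ℂ))
      = a j * (starRingEnd ℂ) (a k) * (((hermiteFun j x * hermiteFun k x : ℝ)) : ℂ) := by
    push_cast; ring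
  rw [this, Complex.mul_re]
  simp

lemma integrable_normSq_Ffun {N : ℕ} (a : Fin N → ℂ) :
    Integrable (fun x : ℝ => ‖Ffun a x‖ ^ 2) := by
  simp only [normSq_Ffun]
  apply integrable_finset_sum
  intro j _
  apply integrable_finset_sum
  intro k _
  exact (integrable_hermiteFun_mul j k).const_mul _

lemma integral_normSq_Ffun {N : ℕ} (a : Fin N → ℂ) :
    (∫ x : ℝ, ‖Ffun a x‖ ^ 2) = ∑ j : Fin N, ‖a j‖ ^ 2 := by
  simp only [normSq_Ffun]
  rw [integral_finset_sum]
  swap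
  · exact fun j _ => integrable_finset_sum _
      (fun k _ => (integrable_hermiteFun_mul j k).const_mul _)
  refine Finset.sum_congr rfl fun j _ => ?_
  rw [integral_finset_sum]
  swap
  · exact fun k _ => (integrable_hermiteFun_mul j k).const_mul _
  rw [Finset.sum_eq_single j]
  · rw [integral_const_mul, integral_hermiteFun_mul]
    have hjj : ((j : ℕ) = (j : ℕ)) := rfl
    rw [if_pos hjj, mul_one, Complex.mul_conj]
    simp [Complex.sq_norm]
  · intro k _ hk
    rw [integral_const_mul, integral_hermiteFun_mul,
      if_neg (fun h => hk ((Fin.ext h).symm)), mul_zero]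
  · simp

lemma integrable_conj_Ffun_cross {N : ℕ} (a b : Fin N → ℂ) (q p : ℝ) :
    Integrable (fun t : ℝ => (starRingEnd ℂ) (Ffun a (q + t)) * Ffun b (q - t) *
      Complex.exp (2 * (p : ℂ) * (t : ℂ) * Complex.I)) := by
  have heq : (fun t : ℝ => (starRingEnd ℂ) (Ffun a (q + t)) * Ffun b (q - t) *
      Complex.exp (2 * (p : ℂ) * (t : ℂ) * Complex.I)) = fun t =>
      ∑ j : Fin N, ∑ k : Fin N, ((starRingEnd ℂ) (a j) * b k) *
        (((hermiteFun j (q + t) : ℝ) : ℂ) * ((hermiteFun k (q - t) : ℝ) : ℂ) *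
          Complex.exp (2 * (p : ℂ) * (t : ℂ) * Complex.I)) := by
    ext t
    unfold Ffun
    rw [map_sum, Finset.sum_mul_sum, Finset.sum_mul]
    refine Finset.sum_congr rfl fun j _ => ?_
    rw [Finset.sum_mul]
    refine Finset.sum_congr rfl fun k _ => ?_
    simp only [map_mul, Complex.conj_ofReal]
    ring
  rw [heq]
  apply integrable_finset_sum
  intro j _
  apply integrable_finset_sum
  intro k _
  exact (integrable_cross j k q p).const_mul _

lemma cross_expand {N : ℕ} (a b : Fin N → ℂ) (q p : ℝ) :
    (∫ t : ℝ, (starRingEnd ℂ) (Ffun a (q + t)) * Ffun b (q - t) *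
      Complex.exp (2 * (p : ℂ) * (t : ℂ) * Complex.I)) =
    ∑ j : Fin N, ∑ k : Fin N, ((starRingEnd ℂ) (a j) * b k) *
      ∫ t : ℝ, ((hermiteFun j (q + t) : ℝ) : ℂ) * ((hermiteFun k (q - t) : ℝ) : ℂ) *
        Complex.exp (2 * (p : ℂ) * (t : ℂ) * Complex.I) := by
  have heq : (fun t : ℝ => (starRingEnd ℂ) (Ffun a (q + t)) * Ffun b (q - t) *
      Complex.exp (2 * (p : ℂ) * (t : ℂ) * Complex.I)) = fun t =>
      ∑ j : Fin N, ∑ k : Fin N, ((starRingEnd ℂ) (a j) * b k) *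
        (((hermiteFun j (q + t) : ℝ) : ℂ) * ((hermiteFun k (q - t) : ℝ) : ℂ) *
          Complex.exp (2 * (p : ℂ) * (t : ℂ) * Complex.I)) := by
    ext t
    unfold Ffun
    rw [map_sum, Finset.sum_mul_sum, Finset.sum_mul]
    refine Finset.sum_congr rfl fun j _ => ?_
    rw [Finset.sum_mul]
    refine Finset.sum_congr rfl fun k _ => ?_
    simp only [map_mul, Complex.conj_ofReal]
    ring
  rw [heq]
  rw [integral_finset_sum]
  swap
  · exact fun j _ => integrable_finset_sum _
      (fun k _ => (integrable_cross j k q p).const_mul _)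
  refine Finset.sum_congr rfl fun j _ => ?_
  rw [integral_finset_sum]
  swap
  · exact fun k _ => (integrable_cross j k q p).const_mul _
  refine Finset.sum_congr rfl fun k _ => ?_
  rw [integral_const_mul]

-- The main analytic bound

lemma norm_cross_integral_le {N : ℕ} (a b : Fin N → ℂ) (q p : ℝ)
    (ha : (∑ j : Fin N, ‖a j‖ ^ 2) = 1) (hb : (∑ j : Fin N, ‖b j‖ ^ 2) = 1) :
    ‖∫ t : ℝ, (starRingEnd ℂ) (Ffun a (q + t)) * Ffun b (q - t) *
      Complex.exp (2 * (p : ℂ) * (t : ℂ) * Complex.I)‖ ≤ 1 := by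
  have h1 : ‖∫ t : ℝ, (starRingEnd ℂ) (Ffun a (q + t)) * Ffun b (q - t) *
      Complex.exp (2 * (p : ℂ) * (t : ℂ) * Complex.I)‖ ≤
      ∫ t : ℝ, ‖(starRingEnd ℂ) (Ffun a (q + t)) * Ffun b (q - t) *
        Complex.exp (2 * (p : ℂ) * (t : ℂ) * Complex.I)‖ := norm_integral_le_integral_norm _
  have habs : ∀ t : ℝ, ‖(starRingEnd ℂ) (Ffun a (q + t)) * Ffun b (q - t) *
      Complex.exp (2 * (p : ℂ) * (t : ℂ) * Complex.I)‖
      = ‖Ffun a (q + t)‖ * ‖Ffun b (q - t)‖ := by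
    intro t
    rw [norm_mul, norm_mul]
    have : ‖Complex.exp (2 * (p : ℂ) * (t : ℂ) * Complex.I)‖ = 1 := by
      rw [Complex.norm_exp]
      simp [Complex.mul_re, Complex.mul_im]
    simp [this]
  have h2 : (∫ t : ℝ, ‖(starRingEnd ℂ) (Ffun a (q + t)) * Ffun b (q - t) *
      Complex.exp (2 * (p : ℂ) * (t : ℂ) * Complex.I)‖) ≤
      ∫ t : ℝ, (‖Ffun a (q + t)‖ ^ 2 + ‖Ffun b (q - t)‖ ^ 2) / 2 := by
    apply integral_mono
    · exact (integrable_conj_Ffun_cross a b q p).norm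
    · exact (((integrable_normSq_Ffun a).comp_add_left q).add
        ((integrable_normSq_Ffun b).comp_sub_left q)).div_const 2
    · intro t
      dsimp only
      rw [habs t]
      nlinarith [sq_nonneg (‖Ffun a (q + t)‖ - ‖Ffun b (q - t)‖), norm_nonneg (Ffun a (q + t)),
        norm_nonneg (Ffun b (q - t))]
  have h3 : (∫ t : ℝ, (‖Ffun a (q + t)‖ ^ 2 + ‖Ffun b (q - t)‖ ^ 2) / 2) = 1 := by
    rw [integral_div, integral_add ((integrable_normSq_Ffun a).comp_add_left q)
      ((integrable_normSq_Ffun b).comp_sub_left q)]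
    have e1 : (∫ t : ℝ, ‖Ffun a (q + t)‖ ^ 2) = 1 := by
      rw [integral_add_left_eq_self (fun x => ‖Ffun a x‖ ^ 2) q, integral_normSq_Ffun, ha]
    have e2 : (∫ t : ℝ, ‖Ffun b (q - t)‖ ^ 2) = 1 := by
      rw [integral_sub_left_eq_self (fun x => ‖Ffun b x‖ ^ 2) volume q, integral_normSq_Ffun, hb]
    rw [e1, e2]
    norm_num
  calc ‖_‖ ≤ _ := h1
    _ ≤ _ := h2
    _ = 1 := h3

lemma conj_crossWigner (f g : ℝ → ℝ) (q p : ℝ) :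
    (starRingEnd ℂ) (crossWigner (fun x => ((f x : ℝ) : ℂ)) (fun x => ((g x : ℝ) : ℂ)) q p)
      = crossWigner (fun x => ((g x : ℝ) : ℂ)) (fun x => ((f x : ℝ) : ℂ)) q p := by
  unfold crossWigner
  rw [map_mul, Complex.conj_ofReal, ← integral_conj]
  congr 1
  rw [← integral_neg_eq_self (fun t : ℝ => (starRingEnd ℂ) ((g (q + t) : ℝ) : ℂ) *
    ((f (q - t) : ℝ) : ℂ) * Complex.exp (2 * (p : ℂ) * (t : ℂ) * Complex.I)) volume]
  congr 1
  ext t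
  simp only [map_mul, Complex.conj_ofReal, Complex.conj_conj, ← Complex.exp_conj,
    Complex.conj_I, Complex.conj_ofReal, map_ofNat, sub_neg_eq_add, Complex.ofReal_neg]
  rw [show q + -t = q - t by ring]
  rw [show (2 : ℂ) * (p : ℂ) * -(t : ℂ) * Complex.I = 2 * (p : ℂ) * (t : ℂ) * -Complex.I by ring]
  ring

lemma WMat_im_eq_zero {N : ℕ} {A : Matrix (Fin N) (Fin N) ℂ} (hA : A.IsHermitian) (q p : ℝ) :
    (WMat A q p).im = 0 := by
  rw [← Complex.conj_eq_iff_im]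
  unfold WMat
  rw [map_sum]
  rw [Finset.sum_comm]
  refine Finset.sum_congr rfl fun j _ => ?_
  rw [map_sum]
  refine Finset.sum_congr rfl fun k _ => ?_
  rw [map_mul, conj_crossWigner]
  congr 1
  exact hA.apply k j  -- guess : conj (A k j) = A j k ?? check

lemma WMat_sub {N : ℕ} (A B : Matrix (Fin N) (Fin N) ℂ) (q p : ℝ) :
    WMat (A - B) q p = WMat A q p - WMat B q p := by
  unfold WMat
  rw [← Finset.sum_sub_distrib]
  refine Finset.sum_congr rfl fun j _ => ?_
  rw [← Finset.sum_sub_distrib]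
  refine Finset.sum_congr rfl fun k _ => ?_
  rw [Matrix.sub_apply, sub_mul]

lemma crossWigner_Ffun {N : ℕ} (a b : Fin N → ℂ) (q p : ℝ) :
    crossWigner (Ffun a) (Ffun b) q p = ∑ j : Fin N, ∑ k : Fin N,
      ((starRingEnd ℂ) (a j) * b k) * crossWigner (fun x => ((hermiteFun j x : ℝ) : ℂ))
        (fun x => ((hermiteFun k x : ℝ) : ℂ)) q p := by
  unfold crossWigner
  rw [cross_expand, Finset.mul_sum]
  refine Finset.sum_congr rfl fun j _ => ?_
  rw [Finset.mul_sum]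
  refine Finset.sum_congr rfl fun k _ => ?_
  simp only [Complex.conj_ofReal]
  ring

lemma entry_eq {N : ℕ} {A : Matrix (Fin N) (Fin N) ℂ} (hA : A.IsHermitian) (j k : Fin N) :
    A j k = ∑ i : Fin N, ((hA.eigenvalues i : ℝ) : ℂ) *
      ((hA.eigenvectorUnitary : Matrix (Fin N) (Fin N) ℂ) j i *
        (starRingEnd ℂ) ((hA.eigenvectorUnitary : Matrix (Fin N) (Fin N) ℂ) k i)) := by
  conv_lhs => rw [hA.spectral_theorem, Unitary.conjStarAlgAut_apply]
  rw [Matrix.mul_apply]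
  refine Finset.sum_congr rfl fun i _ => ?_
  rw [Matrix.mul_diagonal, Matrix.star_apply]
  simp only [Function.comp_apply, RCLike.ofReal_alg]
  ring_nf
  simp [Complex.star_def]

lemma WMat_spectral {N : ℕ} {A : Matrix (Fin N) (Fin N) ℂ} (hA : A.IsHermitian) (q p : ℝ) :
    WMat A q p = ∑ i : Fin N, ((hA.eigenvalues i : ℝ) : ℂ) *
      crossWigner (Ffun (fun j => (starRingEnd ℂ)
          ((hA.eigenvectorUnitary : Matrix (Fin N) (Fin N) ℂ) j i)))
        (Ffun (fun j => (starRingEnd ℂ)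
          ((hA.eigenvectorUnitary : Matrix (Fin N) (Fin N) ℂ) j i))) q p := by
  set U : Matrix (Fin N) (Fin N) ℂ := (hA.eigenvectorUnitary : Matrix (Fin N) (Fin N) ℂ) with hU
  unfold WMat
  have hrhs : ∀ i : Fin N, crossWigner (Ffun (fun j => (starRingEnd ℂ) (U j i)))
      (Ffun (fun j => (starRingEnd ℂ) (U j i))) q p
      = ∑ j : Fin N, ∑ k : Fin N, (U j i * (starRingEnd ℂ) (U k i)) *
        crossWigner (fun x => ((hermiteFun j x : ℝ) : ℂ))
          (fun x => ((hermiteFun k x : ℝ) : ℂ)) q p := by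
    intro i
    rw [crossWigner_Ffun]
    simp only [Complex.conj_conj]
  calc ∑ j : Fin N, ∑ k : Fin N, A j k * crossWigner _ _ q p
      = ∑ j : Fin N, ∑ k : Fin N, ∑ i : Fin N, ((hA.eigenvalues i : ℝ) : ℂ) *
          (U j i * (starRingEnd ℂ) (U k i)) * crossWigner
          (fun x => ((hermiteFun j x : ℝ) : ℂ)) (fun x => ((hermiteFun k x : ℝ) : ℂ)) q p := by
        refine Finset.sum_congr rfl fun j _ => Finset.sum_congr rfl fun k _ => ?_
        rw [entry_eq hA j k, Finset.sum_mul]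
    _ = ∑ j : Fin N, ∑ i : Fin N, ∑ k : Fin N, ((hA.eigenvalues i : ℝ) : ℂ) *
          (U j i * (starRingEnd ℂ) (U k i)) * crossWigner
          (fun x => ((hermiteFun j x : ℝ) : ℂ)) (fun x => ((hermiteFun k x : ℝ) : ℂ)) q p :=
        Finset.sum_congr rfl fun j _ => Finset.sum_comm
    _ = ∑ i : Fin N, ∑ j : Fin N, ∑ k : Fin N, ((hA.eigenvalues i : ℝ) : ℂ) *
          (U j i * (starRingEnd ℂ) (U k i)) * crossWigner
          (fun x => ((hermiteFun j x : ℝ) : ℂ)) (fun x => ((hermiteFun k x : ℝ) : ℂ)) q p :=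
        Finset.sum_comm
    _ = ∑ i : Fin N, ((hA.eigenvalues i : ℝ) : ℂ) *
          crossWigner (Ffun (fun j => (starRingEnd ℂ) (U j i)))
            (Ffun (fun j => (starRingEnd ℂ) (U j i))) q p := by
        refine Finset.sum_congr rfl fun i _ => ?_
        rw [hrhs i, Finset.mul_sum]
        refine Finset.sum_congr rfl fun j _ => ?_
        rw [Finset.mul_sum]
        refine Finset.sum_congr rfl fun k _ => ?_
        ring

lemma column_normSq {N : ℕ} {A : Matrix (Fin N) (Fin N) ℂ} (hA : A.IsHermitian) (i : Fin N) :
    (∑ j : Fin N, ‖(starRingEnd ℂ)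
      ((hA.eigenvectorUnitary : Matrix (Fin N) (Fin N) ℂ) j i)‖ ^ 2) = 1 := by
  set U : Matrix (Fin N) (Fin N) ℂ := (hA.eigenvectorUnitary : Matrix (Fin N) (Fin N) ℂ) with hU
  have hmem := hA.eigenvectorUnitary.2
  have h1 : star U * U = 1 := (Unitary.mem_iff.mp hmem).1
  have h2 := congrFun (congrFun h1 i) i
  rw [Matrix.mul_apply] at h2
  have h3 := congrArg Complex.re h2
  rw [Complex.re_sum] at h3
  have h4 : ∀ j : Fin N, ((star U) i j * U j i).re = ‖(starRingEnd ℂ) (U j i)‖ ^ 2 := by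
    intro j
    rw [Matrix.star_apply]
    rw [show (star (U j i) * U j i) = (starRingEnd ℂ) (U j i) * U j i from rfl]
    rw [Complex.conj_mul']
    simp [← Complex.ofReal_pow, norm_star]
  rw [← Finset.sum_congr rfl (fun j _ => h4 j), h3]
  simp

lemma abs_WMat_le {N : ℕ} {A : Matrix (Fin N) (Fin N) ℂ} (hA : A.IsHermitian) (q p : ℝ) :
    ‖WMat A q p‖ ≤ (1 / Real.pi) * ∑ i : Fin N, |hA.eigenvalues i| := by
  rw [WMat_spectral hA q p]
  have step1 := norm_sum_le Finset.univ (fun i : Fin N => ((hA.eigenvalues i : ℝ) : ℂ) *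
    crossWigner (Ffun (fun j => (starRingEnd ℂ)
        ((hA.eigenvectorUnitary : Matrix (Fin N) (Fin N) ℂ) j i)))
      (Ffun (fun j => (starRingEnd ℂ)
        ((hA.eigenvectorUnitary : Matrix (Fin N) (Fin N) ℂ) j i))) q p)
  refine step1.trans ?_
  rw [Finset.mul_sum]
  refine Finset.sum_le_sum fun i _ => ?_
  rw [norm_mul, Complex.norm_real, Real.norm_eq_abs]
  have hcw : ‖crossWigner (Ffun (fun j => (starRingEnd ℂ)
      ((hA.eigenvectorUnitary : Matrix (Fin N) (Fin N) ℂ) j i)))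
    (Ffun (fun j => (starRingEnd ℂ)
      ((hA.eigenvectorUnitary : Matrix (Fin N) (Fin N) ℂ) j i))) q p‖ ≤ 1 / Real.pi := by
    unfold crossWigner
    rw [norm_mul, Complex.norm_real, Real.norm_eq_abs, abs_of_nonneg (by positivity : (0:ℝ) ≤ 1 / Real.pi)]
    have hint := norm_cross_integral_le _ _ q p (column_normSq hA i) (column_normSq hA i)
    calc (1 / Real.pi) * ‖∫ t : ℝ, _‖ ≤ (1 / Real.pi) * 1 := by
          refine mul_le_mul_of_nonneg_left ?_ (by positivity)
          exact hint
      _ = 1 / Real.pi := mul_one _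
  calc |hA.eigenvalues i| * ‖_‖ ≤ |hA.eigenvalues i| * (1 / Real.pi) :=
        mul_le_mul_of_nonneg_left hcw (abs_nonneg _)
    _ = 1 / Real.pi * |hA.eigenvalues i| := mul_comm _ _

/-- for density matrices `ρ, τ`, the Wigner functions are real
valued and `sup_{(q,p)} |W_ρ(q,p) − W_τ(q,p)| ≤ (1/π) ‖ρ − τ‖₁`. -/
theorem wigner_sup_le_traceNorm (N : ℕ) (ρ τ : Matrix (Fin N) (Fin N) ℂ)
    (hρ : IsDensityMatrix ρ) (hτ : IsDensityMatrix τ) :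
    (∀ q p : ℝ, (WMat ρ q p).im = 0 ∧ (WMat τ q p).im = 0) ∧
    (∀ q p : ℝ, ‖WMat ρ q p - WMat τ q p‖ ≤
      (1 / Real.pi) * traceNorm (ρ - τ) (hρ.1.isHermitian.sub hτ.1.isHermitian)) := by
  constructor
  · intro q p
    exact ⟨WMat_im_eq_zero hρ.1.isHermitian q p, WMat_im_eq_zero hτ.1.isHermitian q p⟩
  · intro q p
    rw [← WMat_sub]
    unfold traceNorm
    exact abs_WMat_le (hρ.1.isHermitian.sub hτ.1.isHermitian) q p
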